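/- Let M be the Puiseux monoid M = ⟨1/p : p prime, p ≥ 3⟩ ∪ ℚ_{≥1}. Then M is not almost atomic; in particular, 3/2 cannot be written as a difference of two atomic elements of M. -/
import Mathlib


/-- `a` is an atom of the set `S` (a Puiseux monoid, hence reduced). -/
def IsAtomOfSet (S : Set ℚ) (a : ℚ) : Prop :=
  a ∈ S ∧ a ≠ 0 ∧ ∀ x ∈ S, ∀ y ∈ S, a = x + y → x = 0 ∨ y = 0

/-- `b` is atomic in `S`: it is `0` or a sum of atoms of `S`. -/
def AtomicOfSet (S : Set ℚ) (b : ℚ) : Prop :=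
  b ∈ AddSubmonoid.closure {a | IsAtomOfSet S a}

/-- The Puiseux monoid `⟨1/p : p prime, p ≥ 3⟩ ∪ ℚ_{≥1}`. -/
def S16 : Set ℚ :=
  (AddSubmonoid.closure {q : ℚ | ∃ p : ℕ, p.Prime ∧ 3 ≤ p ∧ q = 1/(p : ℚ)} : Set ℚ)
    ∪ {x : ℚ | 1 ≤ x}

/-- Rationals with odd denominator form an additive submonoid. -/
def OddDen : AddSubmonoid ℚ where
  carrier := {q | ¬ 2 ∣ q.den}
  zero_mem' := by norm_num
  add_mem' := by
    intro a b ha hb h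
    have hd : 2 ∣ a.den * b.den := h.trans (Rat.add_den_dvd a b)
    rcases (Nat.Prime.dvd_mul Nat.prime_two).mp hd with h2 | h2
    · exact ha h2
    · exact hb h2

lemma third_mem : (1/3 : ℚ) ∈ AddSubmonoid.closure
    {q : ℚ | ∃ p : ℕ, p.Prime ∧ 3 ≤ p ∧ q = 1/(p : ℚ)} :=
  AddSubmonoid.subset_closure ⟨3, by norm_num, le_refl 3, by norm_num⟩

lemma atoms_oddden : ∀ a : ℚ, IsAtomOfSet S16 a → a ∈ OddDen := by
  intro a ⟨haS, ha0, hsplit⟩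
  rcases haS with hcl | hge
  · -- in the closure part: generators have odd denominator
    refine AddSubmonoid.closure_le.mpr ?_ hcl
    rintro q ⟨p, hp, hp3, rfl⟩
    have hp0 : 0 < p := lt_of_lt_of_le (by norm_num) hp3
    have : ((1 : ℚ)/(p : ℚ)).den = p := by
      rw [one_div, Rat.inv_natCast_den_of_pos hp0]
    show ¬ 2 ∣ ((1 : ℚ)/(p : ℚ)).den
    rw [this]
    intro h2
    have := (Nat.prime_dvd_prime_iff_eq Nat.prime_two hp).mp h2
    omega
  · -- a ≥ 1 is not an atom: contradiction
    exfalso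
    simp only [Set.mem_setOf_eq] at hge
    rcases eq_or_lt_of_le hge with h1 | h1
    · -- a = 1 = 1/3 + 2/3
      have h13 : (1/3 : ℚ) ∈ S16 := Or.inl third_mem
      have h23 : (2/3 : ℚ) ∈ S16 := by
        left
        have h := AddSubmonoid.add_mem _ third_mem third_mem
        have e : (1/3 : ℚ) + 1/3 = 2/3 := by norm_num
        rwa [e] at h
      have := hsplit _ h13 _ h23 (by rw [← h1]; norm_num)
      norm_num at this
    · -- a > 1 : pick a large prime p, a = 1/p + (a - 1/p)
      obtain ⟨p, hpge, hp⟩ := Nat.exists_infinite_primes (max 3 (⌈(a-1)⁻¹⌉₊ + 1))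
      have hp3 : 3 ≤ p := le_trans (le_max_left _ _) hpge
      have hp0 : (0 : ℚ) < p := by positivity
      have hpgt : (a - 1)⁻¹ < (p : ℚ) := by
        have h1' : (⌈(a-1)⁻¹⌉₊ : ℚ) < p := by
          exact_mod_cast lt_of_lt_of_le (Nat.lt_succ_self _)
            (le_trans (le_max_right _ _) hpge)
        exact lt_of_le_of_lt (Nat.le_ceil _) h1'
      have ha1 : (0:ℚ) < a - 1 := by linarith
      have hlt : 1/(p : ℚ) < a - 1 := by
        rw [div_lt_iff₀ hp0]
        calc (1 : ℚ) = (a-1) * (a-1)⁻¹ := by field_simp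
        _ < (a-1) * p := by exact mul_lt_mul_of_pos_left hpgt ha1
        _ = (a-1) * p := rfl
      have hmem1 : (1/(p:ℚ)) ∈ S16 :=
        Or.inl (AddSubmonoid.subset_closure ⟨p, hp, hp3, rfl⟩)
      have hmem2 : a - 1/(p:ℚ) ∈ S16 := Or.inr (by
        simp only [Set.mem_setOf_eq]; linarith)
      have := hsplit _ hmem1 _ hmem2 (by ring)
      rcases this with h | h
      · have : (0:ℚ) < 1/(p:ℚ) := by positivity
        linarith [h ▸ this]
      · have : (1:ℚ) ≤ a - 1/(p:ℚ) := by linarith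
        rw [h] at this; linarith

lemma atomic_oddden {c : ℚ} (h : AtomicOfSet S16 c) : ¬ 2 ∣ c.den := by
  have : AddSubmonoid.closure {a | IsAtomOfSet S16 a} ≤ OddDen :=
    AddSubmonoid.closure_le.mpr (fun a ha => atoms_oddden a ha)
  exact this h

/-- `S16` is not almost atomic; in particular `3/2` is not a difference of two
atomic elements. -/
theorem stmt_17 :
    ¬ (∀ b ∈ S16, ∃ c, AtomicOfSet S16 c ∧ AtomicOfSet S16 (b + c)) ∧
    ¬ ∃ u v : ℚ, AtomicOfSet S16 u ∧ AtomicOfSet S16 v ∧ (3/2 : ℚ) = u - v := by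
  have key : ¬ ∃ u v : ℚ, AtomicOfSet S16 u ∧ AtomicOfSet S16 v ∧ (3/2 : ℚ) = u - v := by
    rintro ⟨u, v, hu, hv, heq⟩
    have hu' := atomic_oddden hu
    have hv' := atomic_oddden hv
    have hden : (3/2 : ℚ).den ∣ u.den * (-v).den := by
      rw [heq, sub_eq_add_neg]
      exact Rat.add_den_dvd u (-v)
    rw [Rat.neg_den] at hden
    have h32 : (3/2 : ℚ).den = 2 := by norm_num
    rw [h32] at hden
    rcases (Nat.Prime.dvd_mul Nat.prime_two).mp hden with h | h
    · exact hu' h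
    · exact hv' h
  constructor
  · intro h
    have h32 : (3/2 : ℚ) ∈ S16 := Or.inr (by norm_num)
    obtain ⟨c, hc, hbc⟩ := h (3/2) h32
    exact key ⟨3/2 + c, c, hbc, hc, by ring⟩
  · exact key
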